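/- (Product formula with both endpoints bad) Let P, Q, R, S be real polynomials with P,Q not both zero and R,S not both zero, and a < b. If both a and b are bad numbers for P,Q,R,S, then Ind_a^b(PR − QS, PS + QR) = Ind_a^b(P,Q) + Ind_a^b(R,S). -/

import Mathlib

open Polynomial

noncomputable def pPart (P : ℝ[X]) (x : ℝ) : ℝ[X] :=
  P /ₘ (X - C x) ^ P.rootMultiplicity x

noncomputable def pval (P Q : ℝ[X]) (x : ℝ) : ℤ :=
  (P.rootMultiplicity x : ℤ) - (Q.rootMultiplicity x : ℤ)

noncomputable def SignAt (P Q : ℝ[X]) (x : ℝ) : ℝ :=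
  if P ≠ 0 ∧ Q ≠ 0 ∧ pval P Q x = 0 then
    Real.sign ((pPart P x).eval x * (pPart Q x).eval x)
  else 0

noncomputable def Var (P Q : ℝ[X]) (a b : ℝ) : ℝ :=
  -(1/2) * SignAt P Q a + (1/2) * SignAt P Q b

noncomputable def IndPlus (P Q : ℝ[X]) (x : ℝ) : ℝ :=
  if P ≠ 0 ∧ Q ≠ 0 ∧ pval P Q x < 0 then
    (1/2) * Real.sign ((pPart P x).eval x * (pPart Q x).eval x)
  else 0

noncomputable def IndMinus (P Q : ℝ[X]) (x : ℝ) : ℝ :=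
  if P ≠ 0 ∧ Q ≠ 0 ∧ pval P Q x < 0 then
    (1/2) * (-1 : ℝ) ^ (pval P Q x) * Real.sign ((pPart P x).eval x * (pPart Q x).eval x)
  else 0

noncomputable def IndAt (P Q : ℝ[X]) (x : ℝ) : ℝ := IndPlus P Q x - IndMinus P Q x

noncomputable def IndSeg (P Q : ℝ[X]) (a b : ℝ) : ℝ :=
  IndPlus P Q a + (∑ᶠ x ∈ Set.Ioo a b, IndAt P Q x) - IndMinus P Q b

noncomputable def Ind (P Q : ℝ[X]) (a b : ℝ) : ℝ :=
  if a < b then IndSeg P Q a b else if b < a then -IndSeg P Q b a else 0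

def BadNumber (P Q R S : ℝ[X]) (c : ℝ) : Prop :=
  P ≠ 0 ∧ Q ≠ 0 ∧ R ≠ 0 ∧ S ≠ 0 ∧ P * S + Q * R ≠ 0 ∧
    pval P Q c = pval R S c ∧ pval P Q c < 0 ∧ pval (P * S + Q * R) (Q * S) c = 0

namespace CIaux

open Real Set Polynomial

/-! ### Sign helpers -/

lemma sgn_mul (x y : ℝ) : Real.sign (x * y) = Real.sign x * Real.sign y := by
  rcases lt_trichotomy x 0 with hx | hx | hx <;> rcases lt_trichotomy y 0 with hy | hy | hy <;>
    simp [hx, hy, Real.sign_of_pos, Real.sign_of_neg, Real.sign_zero,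
      mul_pos, mul_pos_of_neg_of_neg, mul_neg_of_pos_of_neg, mul_neg_of_neg_of_pos]

lemma sgn_mul_pos {c : ℝ} (x : ℝ) (hc : 0 < c) : Real.sign (c * x) = Real.sign x := by
  rw [sgn_mul, Real.sign_of_pos hc, one_mul]

lemma sgn_sq {x : ℝ} (hx : x ≠ 0) : Real.sign (x * x) = 1 :=
  Real.sign_of_pos (mul_self_pos.2 hx)

/-! ### pPart lemmas -/

lemma pPart_eval_ne_zero {P : ℝ[X]} (hP : P ≠ 0) (x : ℝ) : (pPart P x).eval x ≠ 0 :=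
  Polynomial.eval_divByMonic_pow_rootMultiplicity_ne_zero x hP

lemma pPart_decomp (P : ℝ[X]) (x : ℝ) :
    (X - C x) ^ (P.rootMultiplicity x) * pPart P x = P :=
  Polynomial.pow_mul_divByMonic_rootMultiplicity_eq P x

lemma pPart_mul {U V : ℝ[X]} (hU : U ≠ 0) (hV : V ≠ 0) (x : ℝ) :
    pPart (U * V) x = pPart U x * pPart V x := by
  have hUV : U * V ≠ 0 := mul_ne_zero hU hV
  have key : (X - C x) ^ ((U * V).rootMultiplicity x) * (pPart U x * pPart V x) = U * V := by
    rw [Polynomial.rootMultiplicity_mul hUV, pow_add]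
    calc (X - C x) ^ U.rootMultiplicity x * (X - C x) ^ V.rootMultiplicity x *
          (pPart U x * pPart V x)
        = ((X - C x) ^ U.rootMultiplicity x * pPart U x) *
          ((X - C x) ^ V.rootMultiplicity x * pPart V x) := by ring
      _ = U * V := by rw [pPart_decomp, pPart_decomp]
  have h2 := congrArg (· /ₘ (X - C x) ^ ((U * V).rootMultiplicity x)) key
  rw [Polynomial.mul_divByMonic_cancel_left _ ((monic_X_sub_C x).pow _)] at h2
  exact h2.symm

lemma pval_mul_left {D U V : ℝ[X]} (hD : D ≠ 0) (hU : U ≠ 0) (hV : V ≠ 0) (x : ℝ) :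
    pval (D * U) (D * V) x = pval U V x := by
  unfold pval
  rw [Polynomial.rootMultiplicity_mul (mul_ne_zero hD hU),
    Polynomial.rootMultiplicity_mul (mul_ne_zero hD hV)]
  push_cast; ring

lemma sgn_pPart_mul_left {D U V : ℝ[X]} (hD : D ≠ 0) (hU : U ≠ 0) (hV : V ≠ 0) (x : ℝ) :
    Real.sign ((pPart (D * U) x).eval x * (pPart (D * V) x).eval x)
      = Real.sign ((pPart U x).eval x * (pPart V x).eval x) := by
  rw [pPart_mul hD hU, pPart_mul hD hV, eval_mul, eval_mul]
  have h : (pPart D x).eval x * (pPart U x).eval x *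
      ((pPart D x).eval x * (pPart V x).eval x)
      = ((pPart D x).eval x * (pPart D x).eval x) *
        ((pPart U x).eval x * (pPart V x).eval x) := by ring
  rw [h, sgn_mul, sgn_sq (pPart_eval_ne_zero hD x), one_mul]

lemma IndPlus_mul_left {D U V : ℝ[X]} (hD : D ≠ 0) (hU : U ≠ 0) (hV : V ≠ 0) (x : ℝ) :
    IndPlus (D * U) (D * V) x = IndPlus U V x := by
  unfold IndPlus
  rw [pval_mul_left hD hU hV]
  by_cases h : U ≠ 0 ∧ V ≠ 0 ∧ pval U V x < 0
  · rw [if_pos h, if_pos ⟨mul_ne_zero hD hU, mul_ne_zero hD hV, h.2.2⟩,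
      sgn_pPart_mul_left hD hU hV]
  · rw [if_neg h, if_neg (by tauto)]

lemma IndMinus_mul_left {D U V : ℝ[X]} (hD : D ≠ 0) (hU : U ≠ 0) (hV : V ≠ 0) (x : ℝ) :
    IndMinus (D * U) (D * V) x = IndMinus U V x := by
  unfold IndMinus
  rw [pval_mul_left hD hU hV]
  by_cases h : U ≠ 0 ∧ V ≠ 0 ∧ pval U V x < 0
  · rw [if_pos h, if_pos ⟨mul_ne_zero hD hU, mul_ne_zero hD hV, h.2.2⟩,
      sgn_pPart_mul_left hD hU hV]
  · rw [if_neg h, if_neg (by tauto)]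

lemma IndAt_mul_left {D U V : ℝ[X]} (hD : D ≠ 0) (hU : U ≠ 0) (hV : V ≠ 0) (x : ℝ) :
    IndAt (D * U) (D * V) x = IndAt U V x := by
  unfold IndAt
  rw [IndPlus_mul_left hD hU hV, IndMinus_mul_left hD hU hV]

lemma IndSeg_mul_left {D U V : ℝ[X]} (hD : D ≠ 0) (hU : U ≠ 0) (hV : V ≠ 0) (a b : ℝ) :
    IndSeg (D * U) (D * V) a b = IndSeg U V a b := by
  unfold IndSeg
  rw [IndPlus_mul_left hD hU hV, IndMinus_mul_left hD hU hV]
  congr 2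
  exact finsum_mem_congr rfl fun x _ => IndAt_mul_left hD hU hV x

end CIaux
namespace CIaux

open Real Set Polynomial

lemma IndAt_eq_zero_of_not_root {P Q : ℝ[X]} {x : ℝ} (hx : ¬ Q.IsRoot x) :
    IndAt P Q x = 0 := by
  have hcond : ¬ (P ≠ 0 ∧ Q ≠ 0 ∧ pval P Q x < 0) := by
    rintro ⟨hP, hQ, hlt⟩
    have h0 : Q.rootMultiplicity x = 0 := Polynomial.rootMultiplicity_eq_zero hx
    unfold pval at hlt
    omega
  unfold IndAt IndPlus IndMinus
  rw [if_neg hcond, if_neg hcond, sub_zero]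

lemma IndAt_support {P Q : ℝ[X]} :
    Function.support (IndAt P Q) ⊆ {x | Q.IsRoot x} := fun x hx => by
  by_contra h
  exact hx (IndAt_eq_zero_of_not_root h)

lemma IndAt_support_finite {P Q : ℝ[X]} (hQ : Q ≠ 0) (s : Set ℝ) :
    (s ∩ Function.support (IndAt P Q)).Finite :=
  Set.Finite.inter_of_right ((Polynomial.finite_setOf_isRoot hQ).subset IndAt_support) s

lemma IndSeg_split {P Q : ℝ[X]} (hQ : Q ≠ 0) {a m b : ℝ} (hm : m ∈ Set.Ioo a b) :
    IndSeg P Q a b = IndSeg P Q a m + IndSeg P Q m b := by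
  unfold IndSeg
  have hsplit : Set.Ioo a b = Set.Ioo a m ∪ Set.Ico m b := by
    rw [Set.Ioo_union_Ico_eq_Ioo hm.1 hm.2.le]
  have hico : Set.Ico m b = insert m (Set.Ioo m b) := (Set.Ioo_insert_left hm.2).symm
  have hdisj : Disjoint (Set.Ioo a m) (Set.Ico m b) := by
    apply Set.disjoint_left.2
    rintro y ⟨_, h1⟩ ⟨h2, _⟩
    exact absurd h2 (not_le.2 h1)
  rw [hsplit, finsum_mem_union' hdisj (IndAt_support_finite hQ _) (IndAt_support_finite hQ _),
    hico, finsum_mem_insert' _ (by simp) (IndAt_support_finite hQ _)]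
  have hIndAt : IndAt P Q m = IndPlus P Q m - IndMinus P Q m := rfl
  rw [hIndAt]
  ring

lemma finsum_Ioo_zero {P Q : ℝ[X]} {a b : ℝ}
    (h : ∀ x ∈ Set.Ioo a b, ¬ Q.IsRoot x) :
    (∑ᶠ x ∈ Set.Ioo a b, IndAt P Q x) = 0 := by
  apply finsum_mem_of_eqOn_zero
  intro x hx
  exact IndAt_eq_zero_of_not_root (h x hx)

end CIaux
namespace CIaux

open Real Set Polynomial Complex

noncomputable def Fc (P Q : ℝ[X]) (t : ℝ) : ℂ := ((P.eval t : ℝ) : ℂ) + ((Q.eval t : ℝ) : ℂ) * Complex.I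

lemma Fc_continuous (P Q : ℝ[X]) : Continuous (Fc P Q) := by
  unfold Fc
  exact (Complex.continuous_ofReal.comp P.continuous_aeval).add
    ((Complex.continuous_ofReal.comp Q.continuous_aeval).mul continuous_const)

lemma Fc_hasDerivAt (P Q : ℝ[X]) (t : ℝ) :
    HasDerivAt (Fc P Q) (((P.derivative.eval t : ℝ) : ℂ) + ((Q.derivative.eval t : ℝ) : ℂ) * Complex.I) t :=
  ((P.hasDerivAt t).ofReal_comp).add (((Q.hasDerivAt t).ofReal_comp).mul_const Complex.I)

lemma Fc_re (P Q : ℝ[X]) (t : ℝ) : (Fc P Q t).re = P.eval t := by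
  simp [Fc]

lemma Fc_im (P Q : ℝ[X]) (t : ℝ) : (Fc P Q t).im = Q.eval t := by
  simp [Fc]

lemma exists_argLift (P Q : ℝ[X]) {a b : ℝ} (hab : a ≤ b)
    (hF : ∀ t ∈ Set.Icc a b, Fc P Q t ≠ 0) :
    ∃ θ : ℝ → ℝ, ContinuousOn θ (Set.Icc a b) ∧ ∀ t ∈ Set.Icc a b,
      Fc P Q t = (‖Fc P Q t‖ : ℂ) * Complex.exp (θ t * Complex.I) := by
  set F := Fc P Q with hFdef
  set F' : ℝ → ℂ := fun t => ((P.derivative.eval t : ℝ) : ℂ) + ((Q.derivative.eval t : ℝ) : ℂ) * Complex.I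
    with hF'def
  have hF'c : Continuous F' :=
    (Complex.continuous_ofReal.comp P.derivative.continuous_aeval).add
      ((Complex.continuous_ofReal.comp Q.derivative.continuous_aeval).mul continuous_const)
  set clamp : ℝ → ℝ := fun s => max a (min s b) with hclampdef
  have hclampc : Continuous clamp := continuous_const.max (continuous_id.min continuous_const)
  have hclampmem : ∀ s, clamp s ∈ Set.Icc a b := fun s =>
    ⟨le_max_left _ _, max_le hab (min_le_right _ _)⟩
  have hclampeq : ∀ s ∈ Set.Icc a b, clamp s = s := fun s hs => by
    simp only [hclampdef]
    rw [min_eq_left hs.2, max_eq_right hs.1]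
  set g : ℝ → ℂ := fun s => F' (clamp s) / F (clamp s) with hgdef
  have hgc : Continuous g := by
    apply (hF'c.comp hclampc).div ((Fc_continuous P Q).comp hclampc)
    exact fun s => hF _ (hclampmem s)
  set L : ℝ → ℂ := fun t => ∫ s in a..t, g s with hLdef
  have hL : ∀ t, HasDerivAt L (g t) t := fun t =>
    (hgc.integral_hasStrictDerivAt a t).hasDerivAt
  have hLc : Continuous L := continuous_iff_continuousAt.2 fun t => (hL t).continuousAt
  set H : ℝ → ℂ := fun t => F t * Complex.exp (-L t) with hHdef
  have hHc : ContinuousOn H (Set.Icc a b) :=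
    ((Fc_continuous P Q).mul ((hLc.neg).cexp)).continuousOn
  have hHconst : ∀ t ∈ Set.Icc a b, H t = H a := by
    apply constant_of_has_deriv_right_zero hHc
    intro x hx
    have hder : HasDerivAt H (F' x * Complex.exp (-L x) + F x * (Complex.exp (-L x) * (-g x))) x :=
      (Fc_hasDerivAt P Q x).mul ((hL x).neg.cexp)
    have hx' : x ∈ Set.Icc a b := ⟨hx.1, hx.2.le⟩
    have hgx : g x = F' x / F x := by simp only [hgdef]; rw [hclampeq x hx']
    have h0 : F' x * Complex.exp (-L x) + F x * (Complex.exp (-L x) * (-g x)) = 0 := by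
      rw [hgx]
      field_simp [hF x hx']
      ring
    rw [h0] at hder
    exact hder.hasDerivWithinAt
  have hHa : H a = F a := by
    simp only [hHdef, hLdef, intervalIntegral.integral_same, neg_zero, Complex.exp_zero, mul_one]
  have hFt : ∀ t ∈ Set.Icc a b, F t = F a * Complex.exp (L t) := by
    intro t ht
    have hconst := hHconst t ht
    rw [hHa] at hconst
    calc F t = F t * Complex.exp (-L t) * Complex.exp (L t) := by
          rw [mul_assoc, ← Complex.exp_add, neg_add_cancel, Complex.exp_zero, mul_one]
      _ = F a * Complex.exp (L t) := by rw [show F t * Complex.exp (-L t) = F a from hconst]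
  refine ⟨fun t => Complex.arg (F a) + (L t).im,
    (continuous_const.add (Complex.continuous_im.comp hLc)).continuousOn, ?_⟩
  intro t ht
  have habs : (‖F t‖ : ℝ) = ‖F a‖ * Real.exp ((L t).re) := by
    rw [hFt t ht, norm_mul, Complex.norm_exp]
  rw [habs, hFt t ht]
  conv_lhs => rw [← Complex.norm_mul_exp_arg_mul_I (F a), ← Complex.re_add_im (L t)]
  rw [Complex.exp_add]
  push_cast
  rw [add_mul, Complex.exp_add]
  ring

end CIaux
namespace CIaux

open Real Set Polynomial

open Classical in
noncomputable def cval (θ : ℝ) : ℝ :=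
  if ∃ k : ℤ, θ = k * Real.pi then θ / Real.pi else ⌊θ / Real.pi⌋ + 1/2

lemma cval_int (k : ℤ) : cval ((k : ℝ) * Real.pi) = k := by
  rw [cval, if_pos ⟨k, rfl⟩, mul_div_cancel_right₀ _ Real.pi_ne_zero]

lemma cval_of_mem {k : ℤ} {θ : ℝ} (h : θ ∈ Set.Ioo ((k : ℝ) * Real.pi) (((k : ℝ) + 1) * Real.pi)) :
    cval θ = (k : ℝ) + 1/2 := by
  have hπ := Real.pi_pos
  have hne : ¬ ∃ n : ℤ, θ = (n : ℝ) * Real.pi := by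
    rintro ⟨n, rfl⟩
    have h1 : (k : ℝ) < n := lt_of_mul_lt_mul_right h.1 hπ.le
    have h2 : (n : ℝ) < (k : ℝ) + 1 := lt_of_mul_lt_mul_right h.2 hπ.le
    have : (k : ℤ) < n := by exact_mod_cast h1
    have : (n : ℤ) < k + 1 := by exact_mod_cast h2
    omega
  rw [cval, if_neg hne]
  have hfl : ⌊θ / Real.pi⌋ = k := by
    rw [Int.floor_eq_iff]
    constructor
    · rw [le_div_iff₀ hπ]; exact h.1.le
    · rw [div_lt_iff₀ hπ]; push_cast; exact h.2
  rw [hfl]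

lemma sign_neg_one_zpow (k : ℤ) : Real.sign ((-1 : ℝ) ^ k) = (-1 : ℝ) ^ k := by
  rcases Int.even_or_odd k with hk | hk
  · rw [hk.neg_one_zpow]; exact Real.sign_one
  · rw [hk.neg_one_zpow]; rw [show (-1 : ℝ) = -(1:ℝ) by ring, Real.sign_neg, Real.sign_one]

lemma neg_one_zpow_mul_self (k : ℤ) : (-1 : ℝ) ^ k * (-1 : ℝ) ^ k = 1 := by
  rw [← zpow_add₀ (by norm_num : (-1 : ℝ) ≠ 0)]
  exact Even.neg_one_zpow ⟨k, rfl⟩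

lemma neg_one_zpow_succ_mul_self (k : ℤ) : (-1 : ℝ) ^ (k + 1) * (-1 : ℝ) ^ k = -1 := by
  rw [← zpow_add₀ (by norm_num : (-1 : ℝ) ≠ 0)]
  exact Odd.neg_one_zpow ⟨k, by ring⟩

lemma neg_one_zpow_ne_zero (k : ℤ) : (-1 : ℝ) ^ k ≠ 0 := by
  rcases Int.even_or_odd k with hk | hk
  · rw [hk.neg_one_zpow]; norm_num
  · rw [hk.neg_one_zpow]; norm_num

lemma neg_one_zpow_neg_natCast (q : ℤ) : (-1 : ℝ) ^ (-q) = (-1 : ℝ) ^ q := by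
  rw [zpow_neg]
  exact inv_eq_of_mul_eq_one_right (neg_one_zpow_mul_self q)

lemma sin_sign_strip {k : ℤ} {θ : ℝ}
    (h : θ ∈ Set.Ioo ((k : ℝ) * Real.pi) (((k : ℝ) + 1) * Real.pi)) :
    Real.sign (Real.sin θ) = (-1 : ℝ) ^ k := by
  have h1 : Real.sin (θ - k * Real.pi + k * Real.pi) = (-1) ^ k * Real.sin (θ - k * Real.pi) :=
    Real.sin_add_int_mul_pi _ k
  rw [sub_add_cancel] at h1
  have h2 : 0 < Real.sin (θ - k * Real.pi) := by
    apply Real.sin_pos_of_pos_of_lt_pi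
    · linarith [h.1]
    · have := h.2; linarith
  rw [h1, sgn_mul, Real.sign_of_pos h2, mul_one, sign_neg_one_zpow]

lemma cos_int_mul_pi (k : ℤ) : Real.cos ((k : ℝ) * Real.pi) = (-1 : ℝ) ^ k := by
  have := Real.cos_add_int_mul_pi 0 k
  simpa using this

lemma polar_re (c θ : ℝ) : ((c : ℂ) * Complex.exp ((θ : ℂ) * Complex.I)).re = c * Real.cos θ := by
  rw [Complex.exp_mul_I]
  simp [← Complex.ofReal_cos, ← Complex.ofReal_sin]

lemma polar_im (c θ : ℝ) : ((c : ℂ) * Complex.exp ((θ : ℂ) * Complex.I)).im = c * Real.sin θ := by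
  rw [Complex.exp_mul_I]
  simp [← Complex.ofReal_cos, ← Complex.ofReal_sin]

end CIaux
namespace CIaux

open Real Set Polynomial

lemma sign_neg_one_pow (q : ℕ) : Real.sign ((-1 : ℝ) ^ q) = (-1 : ℝ) ^ q := by
  rcases Nat.even_or_odd q with hq | hq
  · rw [hq.neg_one_pow]; exact Real.sign_one
  · rw [hq.neg_one_pow, show (-1 : ℝ) = -(1:ℝ) by ring, Real.sign_neg, Real.sign_one]

lemma neg_one_pow_mul_self (q : ℕ) : (-1 : ℝ) ^ q * (-1 : ℝ) ^ q = 1 := by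
  rw [← pow_add]
  exact Even.neg_one_pow ⟨q, rfl⟩

lemma lemA (P Q : ℝ[X]) (hP : P ≠ 0) (hQ : Q ≠ 0) (θ : ℝ → ℝ) :
    ∀ n : ℕ, ∀ a b : ℝ, a < b →
      (Q.roots.toFinset.filter (fun x => x ∈ Set.Ioo a b)).card = n →
      (∀ t ∈ Set.Icc a b, ¬ (P.IsRoot t ∧ Q.IsRoot t)) →
      ContinuousOn θ (Set.Icc a b) →
      (∀ t ∈ Set.Icc a b,
        Fc P Q t = (‖Fc P Q t‖ : ℂ) * Complex.exp ((θ t : ℂ) * Complex.I)) →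
      IndSeg P Q a b = cval (θ b) - cval (θ a) := by
  intro n
  induction n using Nat.strong_induction_on with
  | _ n IH =>
  intro a b hab hcard hcr hθc hθ
  by_cases hroot : ∃ m ∈ Set.Ioo a b, Q.IsRoot m
  · -- inductive step : split at an interior root
    obtain ⟨m, hm, hQm⟩ := hroot
    have hmem : m ∈ Q.roots.toFinset.filter (fun x => x ∈ Set.Ioo a b) :=
      Finset.mem_filter.2 ⟨Multiset.mem_toFinset.2 (Polynomial.mem_roots'.2 ⟨hQ, hQm⟩), hm⟩
    have hcard1 : (Q.roots.toFinset.filter (fun x => x ∈ Set.Ioo a m)).card < n := by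
      have hsub : Q.roots.toFinset.filter (fun x => x ∈ Set.Ioo a m) ⊆
          (Q.roots.toFinset.filter (fun x => x ∈ Set.Ioo a b)).erase m := by
        intro x hx
        rw [Finset.mem_filter] at hx
        rw [Finset.mem_erase, Finset.mem_filter]
        exact ⟨ne_of_lt hx.2.2, hx.1, hx.2.1, hx.2.2.trans hm.2⟩
      calc (Q.roots.toFinset.filter (fun x => x ∈ Set.Ioo a m)).card
          ≤ _ := Finset.card_le_card hsub
        _ < _ := Finset.card_erase_lt_of_mem hmem
        _ = n := hcard
    have hcard2 : (Q.roots.toFinset.filter (fun x => x ∈ Set.Ioo m b)).card < n := by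
      have hsub : Q.roots.toFinset.filter (fun x => x ∈ Set.Ioo m b) ⊆
          (Q.roots.toFinset.filter (fun x => x ∈ Set.Ioo a b)).erase m := by
        intro x hx
        rw [Finset.mem_filter] at hx
        rw [Finset.mem_erase, Finset.mem_filter]
        exact ⟨(ne_of_lt hx.2.1).symm, hx.1, hm.1.trans hx.2.1, hx.2.2⟩
      calc (Q.roots.toFinset.filter (fun x => x ∈ Set.Ioo m b)).card
          ≤ _ := Finset.card_le_card hsub
        _ < _ := Finset.card_erase_lt_of_mem hmem
        _ = n := hcard
    have h1 : IndSeg P Q a m = cval (θ m) - cval (θ a) :=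
      IH _ hcard1 a m hm.1 rfl (fun t ht => hcr t ⟨ht.1, ht.2.trans hm.2.le⟩)
        (hθc.mono (Set.Icc_subset_Icc_right hm.2.le))
        (fun t ht => hθ t ⟨ht.1, ht.2.trans hm.2.le⟩)
    have h2 : IndSeg P Q m b = cval (θ b) - cval (θ m) :=
      IH _ hcard2 m b hm.2 rfl (fun t ht => hcr t ⟨hm.1.le.trans ht.1, ht.2⟩)
        (hθc.mono (Set.Icc_subset_Icc_left hm.1.le))
        (fun t ht => hθ t ⟨hm.1.le.trans ht.1, ht.2⟩)
    rw [IndSeg_split hQ hm, h1, h2]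
    ring
  · -- base case : no interior roots of Q
    push_neg at hroot
    have hFne : ∀ t ∈ Set.Icc a b, Fc P Q t ≠ 0 := by
      intro t ht h0
      refine hcr t ht ⟨?_, ?_⟩
      · show P.eval t = 0; rw [← Fc_re P Q t, h0, Complex.zero_re]
      · show Q.eval t = 0; rw [← Fc_im P Q t, h0, Complex.zero_im]
    set r : ℝ → ℝ := fun t => ‖Fc P Q t‖ with hr
    have hrpos : ∀ t ∈ Set.Icc a b, 0 < r t := fun t ht =>
      norm_pos_iff.mpr (hFne t ht)
    have hcos : ∀ t ∈ Set.Icc a b, P.eval t = r t * Real.cos (θ t) := by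
      intro t ht
      rw [← Fc_re P Q t, hθ t ht, polar_re]
    have hsin : ∀ t ∈ Set.Icc a b, Q.eval t = r t * Real.sin (θ t) := by
      intro t ht
      rw [← Fc_im P Q t, hθ t ht, polar_im]
    set t₀ := (a + b) / 2 with ht₀def
    have ht₀ : t₀ ∈ Set.Ioo a b := ⟨by simp only [ht₀def]; linarith, by simp only [ht₀def]; linarith⟩
    have hQt₀ : Q.eval t₀ ≠ 0 := fun h => hroot t₀ ht₀ h
    have hsint₀ : Real.sin (θ t₀) ≠ 0 := by
      intro h
      exact hQt₀ (by rw [hsin t₀ (Set.Ioo_subset_Icc_self ht₀), h, mul_zero])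
    set k := ⌊θ t₀ / Real.pi⌋ with hk
    have hπ := Real.pi_pos
    have hθt₀ : θ t₀ ∈ Set.Ioo ((k : ℝ) * Real.pi) (((k : ℝ) + 1) * Real.pi) := by
      have h1 : (k : ℝ) * Real.pi ≤ θ t₀ := by
        rw [← le_div_iff₀ hπ]; exact Int.floor_le _
      have h2 : θ t₀ < ((k : ℝ) + 1) * Real.pi := by
        rw [← div_lt_iff₀ hπ]; exact Int.lt_floor_add_one _
      refine ⟨lt_of_le_of_ne h1 fun h => hsint₀ ?_, h2⟩
      rw [← h]; exact Real.sin_int_mul_pi k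
    have hsinK1 : Real.sin (((k : ℝ) + 1) * Real.pi) = 0 := by
      rw [show ((k : ℝ) + 1) = ((k + 1 : ℤ) : ℝ) by push_cast; ring]
      exact Real.sin_int_mul_pi _
    have hstrip : ∀ t ∈ Set.Ioo a b,
        θ t ∈ Set.Ioo ((k : ℝ) * Real.pi) (((k : ℝ) + 1) * Real.pi) := by
      intro t ht
      by_contra hcon
      simp only [Set.mem_Ioo, not_and_or, not_lt] at hcon
      have hconn : Set.uIcc t t₀ ⊆ Set.Ioo a b := Set.ordConnected_Ioo.uIcc_subset ht ht₀
      have hcont : ContinuousOn θ (Set.uIcc t t₀) :=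
        hθc.mono (hconn.trans Set.Ioo_subset_Icc_self)
      have hex : ∃ s ∈ Set.uIcc t t₀, Real.sin (θ s) = 0 := by
        rcases hcon with h | h
        · have hmem : (k : ℝ) * Real.pi ∈ Set.uIcc (θ t) (θ t₀) :=
            Set.mem_uIcc.2 (Or.inl ⟨h, hθt₀.1.le⟩)
          obtain ⟨s, hs, hθs⟩ := intermediate_value_uIcc hcont hmem
          exact ⟨s, hs, by rw [hθs]; exact Real.sin_int_mul_pi k⟩
        · have hmem : ((k : ℝ) + 1) * Real.pi ∈ Set.uIcc (θ t) (θ t₀) :=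
            Set.mem_uIcc.2 (Or.inr ⟨hθt₀.2.le, h⟩)
          obtain ⟨s, hs, hθs⟩ := intermediate_value_uIcc hcont hmem
          exact ⟨s, hs, by rw [hθs]; exact hsinK1⟩
      obtain ⟨s, hs, hsin0⟩ := hex
      have hsab : s ∈ Set.Ioo a b := hconn hs
      exact hroot s hsab (by
        show Q.eval s = 0
        rw [hsin s (Set.Ioo_subset_Icc_self hsab), hsin0, mul_zero])
    haveI hnbA : (nhdsWithin a (Set.Ioo a b)).NeBot :=
      mem_closure_iff_nhdsWithin_neBot.mp (by rw [closure_Ioo hab.ne]; exact ⟨le_rfl, hab.le⟩)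
    haveI hnbB : (nhdsWithin b (Set.Ioo a b)).NeBot :=
      mem_closure_iff_nhdsWithin_neBot.mp (by rw [closure_Ioo hab.ne]; exact ⟨hab.le, le_rfl⟩)
    have hstripa : θ a ∈ Set.Icc ((k : ℝ) * Real.pi) (((k : ℝ) + 1) * Real.pi) := by
      have hca : Filter.Tendsto θ (nhdsWithin a (Set.Ioo a b)) (nhds (θ a)) :=
        (hθc a ⟨le_rfl, hab.le⟩).mono Set.Ioo_subset_Icc_self
      constructor
      · exact ge_of_tendsto hca
          (Filter.eventually_of_mem self_mem_nhdsWithin fun t ht => (hstrip t ht).1.le)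
      · exact le_of_tendsto hca
          (Filter.eventually_of_mem self_mem_nhdsWithin fun t ht => (hstrip t ht).2.le)
    have hstripb : θ b ∈ Set.Icc ((k : ℝ) * Real.pi) (((k : ℝ) + 1) * Real.pi) := by
      have hcb : Filter.Tendsto θ (nhdsWithin b (Set.Ioo a b)) (nhds (θ b)) :=
        (hθc b ⟨hab.le, le_rfl⟩).mono Set.Ioo_subset_Icc_self
      constructor
      · exact ge_of_tendsto hcb
          (Filter.eventually_of_mem self_mem_nhdsWithin fun t ht => (hstrip t ht).1.le)
      · exact le_of_tendsto hcb
          (Filter.eventually_of_mem self_mem_nhdsWithin fun t ht => (hstrip t ht).2.le)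
    have hfin : (∑ᶠ x ∈ Set.Ioo a b, IndAt P Q x) = 0 :=
      finsum_Ioo_zero (fun x hx hr' => hroot x hx hr')
    -- endpoint a
    have hA : cval (θ a) = (k : ℝ) + 1/2 - IndPlus P Q a := by
      by_cases hQa : Q.eval a = 0
      · -- bad endpoint
        have hPa : P.eval a ≠ 0 := fun h => hcr a ⟨le_rfl, hab.le⟩ ⟨h, hQa⟩
        have hQmult : 0 < Polynomial.rootMultiplicity a Q :=
          (Polynomial.rootMultiplicity_pos hQ).2 hQa
        have hPmult : Polynomial.rootMultiplicity a P = 0 :=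
          Polynomial.rootMultiplicity_eq_zero hPa
        have hcond : P ≠ 0 ∧ Q ≠ 0 ∧ pval P Q a < 0 :=
          ⟨hP, hQ, by unfold pval; rw [hPmult]; push_cast; omega⟩
        have hPP : pPart P a = P := by
          unfold pPart; rw [hPmult, pow_zero, Polynomial.divByMonic_one]
        have hea : (pPart Q a).eval a ≠ 0 := pPart_eval_ne_zero hQ a
        have heq : ∀ t : ℝ, Q.eval t =
            (t - a) ^ (Polynomial.rootMultiplicity a Q) * (pPart Q a).eval t := by
          intro t
          conv_lhs => rw [← pPart_decomp Q a]
          simp [Polynomial.eval_mul, Polynomial.eval_pow]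
        have hsigne : Real.sign ((pPart Q a).eval a) = (-1 : ℝ) ^ k := by
          have hev : ∀ᶠ t in nhdsWithin a (Set.Ioi a),
              Real.sign ((pPart Q a).eval t) = Real.sign ((pPart Q a).eval a) := by
            rcases lt_or_gt_of_ne hea with hlt | hgt
            · have hop : {t : ℝ | (pPart Q a).eval t < 0} ∈ nhds a :=
                (isOpen_Iio.preimage (pPart Q a).continuous_aeval).mem_nhds hlt
              filter_upwards [nhdsWithin_le_nhds hop] with t ht
              rw [Real.sign_of_neg ht, Real.sign_of_neg hlt]
            · have hop : {t : ℝ | 0 < (pPart Q a).eval t} ∈ nhds a :=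
                (isOpen_Ioi.preimage (pPart Q a).continuous_aeval).mem_nhds hgt
              filter_upwards [nhdsWithin_le_nhds hop] with t ht
              rw [Real.sign_of_pos ht, Real.sign_of_pos hgt]
          have hmem : ∀ᶠ t in nhdsWithin a (Set.Ioi a), t ∈ Set.Ioo a b :=
            Ioo_mem_nhdsGT_of_mem ⟨le_rfl, hab⟩
          obtain ⟨t, hts, htIoo⟩ := (hev.and hmem).exists
          have h1 : Real.sign (Q.eval t) = Real.sign ((pPart Q a).eval t) := by
            rw [heq t]
            exact sgn_mul_pos _ (pow_pos (sub_pos.2 htIoo.1) _)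
          have h2 : Real.sign (Q.eval t) = (-1 : ℝ) ^ k := by
            rw [hsin t (Set.Ioo_subset_Icc_self htIoo),
              sgn_mul_pos _ (hrpos t (Set.Ioo_subset_Icc_self htIoo)),
              sin_sign_strip (hstrip t htIoo)]
          calc Real.sign ((pPart Q a).eval a) = Real.sign ((pPart Q a).eval t) := hts.symm
            _ = Real.sign (Q.eval t) := h1.symm
            _ = (-1 : ℝ) ^ k := h2
        have hsina : Real.sin (θ a) = 0 := by
          have h0 : r a * Real.sin (θ a) = 0 := by
            rw [← hsin a ⟨le_rfl, hab.le⟩, hQa]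
          rcases mul_eq_zero.1 h0 with h | h
          · exact absurd h (hrpos a ⟨le_rfl, hab.le⟩).ne'
          · exact h
        obtain ⟨nn, hnn⟩ := Real.sin_eq_zero_iff.1 hsina
        have hn_cases : nn = k ∨ nn = k + 1 := by
          have h1 : (k : ℝ) * Real.pi ≤ (nn : ℝ) * Real.pi := by rw [hnn]; exact hstripa.1
          have h2 : (nn : ℝ) * Real.pi ≤ ((k : ℝ) + 1) * Real.pi := by rw [hnn]; exact hstripa.2
          have h1' : (k : ℝ) ≤ (nn : ℝ) := le_of_mul_le_mul_right h1 hπ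
          have h2' : (nn : ℝ) ≤ (k : ℝ) + 1 := le_of_mul_le_mul_right h2 hπ
          have h1'' : (k : ℤ) ≤ nn := by exact_mod_cast h1'
          have h2'' : (nn : ℤ) ≤ k + 1 := by exact_mod_cast h2'
          omega
        have hIP : IndPlus P Q a
            = 1/2 * (Real.sign (P.eval a) * Real.sign ((pPart Q a).eval a)) := by
          rw [IndPlus, if_pos hcond, hPP, sgn_mul]
        rcases hn_cases with h | h
        · have hθa : θ a = (k : ℝ) * Real.pi := by rw [← hnn, h]
          have hsignP : Real.sign (P.eval a) = (-1 : ℝ) ^ k := by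
            rw [hcos a ⟨le_rfl, hab.le⟩, sgn_mul_pos _ (hrpos a ⟨le_rfl, hab.le⟩), hθa,
              cos_int_mul_pi, sign_neg_one_zpow]
          rw [hθa, cval_int, hIP, hsignP, hsigne, neg_one_zpow_mul_self]
          ring
        · have hθa : θ a = ((k : ℝ) + 1) * Real.pi := by rw [← hnn, h]; push_cast; ring
          have hsignP : Real.sign (P.eval a) = (-1 : ℝ) ^ (k + 1) := by
            rw [hcos a ⟨le_rfl, hab.le⟩, sgn_mul_pos _ (hrpos a ⟨le_rfl, hab.le⟩), hθa,
              show ((k : ℝ) + 1) = ((k + 1 : ℤ) : ℝ) by push_cast; ring,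
              cos_int_mul_pi, sign_neg_one_zpow]
          have hcv : cval (θ a) = (k : ℝ) + 1 := by
            rw [hθa, show ((k : ℝ) + 1) = ((k + 1 : ℤ) : ℝ) by push_cast; ring, cval_int]
          rw [hcv, hIP, hsignP, hsigne, neg_one_zpow_succ_mul_self]
          ring
      · -- regular endpoint
        have hIP : IndPlus P Q a = 0 := by
          rw [IndPlus, if_neg]
          rintro ⟨-, -, hlt⟩
          have h0 : Polynomial.rootMultiplicity a Q = 0 :=
            Polynomial.rootMultiplicity_eq_zero hQa
          unfold pval at hlt
          rw [h0] at hlt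
          push_cast at hlt
          omega
        have hsa : Real.sin (θ a) ≠ 0 := by
          intro h
          exact hQa (by rw [hsin a ⟨le_rfl, hab.le⟩, h, mul_zero])
        have hmema : θ a ∈ Set.Ioo ((k : ℝ) * Real.pi) (((k : ℝ) + 1) * Real.pi) := by
          refine ⟨lt_of_le_of_ne hstripa.1 fun h => hsa ?_,
            lt_of_le_of_ne hstripa.2 fun h => hsa ?_⟩
          · rw [← h]; exact Real.sin_int_mul_pi k
          · rw [h]; exact hsinK1
        rw [cval_of_mem hmema, hIP]
        ring
    -- endpoint b
    have hB : cval (θ b) = (k : ℝ) + 1/2 - IndMinus P Q b := by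
      by_cases hQb : Q.eval b = 0
      · have hPb : P.eval b ≠ 0 := fun h => hcr b ⟨hab.le, le_rfl⟩ ⟨h, hQb⟩
        have hQmult : 0 < Polynomial.rootMultiplicity b Q :=
          (Polynomial.rootMultiplicity_pos hQ).2 hQb
        have hPmult : Polynomial.rootMultiplicity b P = 0 :=
          Polynomial.rootMultiplicity_eq_zero hPb
        have hcond : P ≠ 0 ∧ Q ≠ 0 ∧ pval P Q b < 0 :=
          ⟨hP, hQ, by unfold pval; rw [hPmult]; push_cast; omega⟩
        have hPP : pPart P b = P := by
          unfold pPart; rw [hPmult, pow_zero, Polynomial.divByMonic_one]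
        have heb : (pPart Q b).eval b ≠ 0 := pPart_eval_ne_zero hQ b
        set q := Polynomial.rootMultiplicity b Q with hqdef
        have heq : ∀ t : ℝ, Q.eval t = (t - b) ^ q * (pPart Q b).eval t := by
          intro t
          conv_lhs => rw [← pPart_decomp Q b]
          simp [Polynomial.eval_mul, Polynomial.eval_pow, hqdef]
        have hsigne : Real.sign ((pPart Q b).eval b) = (-1 : ℝ) ^ q * (-1 : ℝ) ^ k := by
          have hev : ∀ᶠ t in nhdsWithin b (Set.Iio b),
              Real.sign ((pPart Q b).eval t) = Real.sign ((pPart Q b).eval b) := by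
            rcases lt_or_gt_of_ne heb with hlt | hgt
            · have hop : {t : ℝ | (pPart Q b).eval t < 0} ∈ nhds b :=
                (isOpen_Iio.preimage (pPart Q b).continuous_aeval).mem_nhds hlt
              filter_upwards [nhdsWithin_le_nhds hop] with t ht
              rw [Real.sign_of_neg ht, Real.sign_of_neg hlt]
            · have hop : {t : ℝ | 0 < (pPart Q b).eval t} ∈ nhds b :=
                (isOpen_Ioi.preimage (pPart Q b).continuous_aeval).mem_nhds hgt
              filter_upwards [nhdsWithin_le_nhds hop] with t ht
              rw [Real.sign_of_pos ht, Real.sign_of_pos hgt]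
          have hmem : ∀ᶠ t in nhdsWithin b (Set.Iio b), t ∈ Set.Ioo a b :=
            Ioo_mem_nhdsLT_of_mem ⟨hab, le_rfl⟩
          obtain ⟨t, hts, htIoo⟩ := (hev.and hmem).exists
          have h1 : Real.sign (Q.eval t)
              = (-1 : ℝ) ^ q * Real.sign ((pPart Q b).eval t) := by
            rw [heq t, show (t - b) ^ q * (pPart Q b).eval t
                = (-1 : ℝ) ^ q * ((b - t) ^ q * (pPart Q b).eval t) by
              rw [show t - b = -(b - t) by ring, neg_pow]; ring]
            rw [sgn_mul, sign_neg_one_pow,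
              sgn_mul_pos _ (pow_pos (sub_pos.2 htIoo.2) _)]
          have h2 : Real.sign (Q.eval t) = (-1 : ℝ) ^ k := by
            rw [hsin t (Set.Ioo_subset_Icc_self htIoo),
              sgn_mul_pos _ (hrpos t (Set.Ioo_subset_Icc_self htIoo)),
              sin_sign_strip (hstrip t htIoo)]
          have h3 : (-1 : ℝ) ^ q * Real.sign ((pPart Q b).eval t) = (-1 : ℝ) ^ k := by
            rw [← h1, h2]
          calc Real.sign ((pPart Q b).eval b) = Real.sign ((pPart Q b).eval t) := hts.symm
            _ = ((-1 : ℝ) ^ q * (-1 : ℝ) ^ q) * Real.sign ((pPart Q b).eval t) := by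
                rw [neg_one_pow_mul_self, one_mul]
            _ = (-1 : ℝ) ^ q * ((-1 : ℝ) ^ q * Real.sign ((pPart Q b).eval t)) := by ring
            _ = (-1 : ℝ) ^ q * (-1 : ℝ) ^ k := by rw [h3]
        have hpv : pval P Q b = -(q : ℤ) := by
          unfold pval; rw [hPmult, ← hqdef]; push_cast; ring
        have hIM : IndMinus P Q b = 1/2 * (-1 : ℝ) ^ q
            * (Real.sign (P.eval b) * Real.sign ((pPart Q b).eval b)) := by
          rw [IndMinus, if_pos hcond, hPP, sgn_mul, hpv, neg_one_zpow_neg_natCast, zpow_natCast]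
        have hsinb : Real.sin (θ b) = 0 := by
          have h0 : r b * Real.sin (θ b) = 0 := by
            rw [← hsin b ⟨hab.le, le_rfl⟩, hQb]
          rcases mul_eq_zero.1 h0 with h | h
          · exact absurd h (hrpos b ⟨hab.le, le_rfl⟩).ne'
          · exact h
        obtain ⟨nn, hnn⟩ := Real.sin_eq_zero_iff.1 hsinb
        have hn_cases : nn = k ∨ nn = k + 1 := by
          have h1 : (k : ℝ) * Real.pi ≤ (nn : ℝ) * Real.pi := by rw [hnn]; exact hstripb.1
          have h2 : (nn : ℝ) * Real.pi ≤ ((k : ℝ) + 1) * Real.pi := by rw [hnn]; exact hstripb.2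
          have h1' : (k : ℝ) ≤ (nn : ℝ) := le_of_mul_le_mul_right h1 hπ
          have h2' : (nn : ℝ) ≤ (k : ℝ) + 1 := le_of_mul_le_mul_right h2 hπ
          have h1'' : (k : ℤ) ≤ nn := by exact_mod_cast h1'
          have h2'' : (nn : ℤ) ≤ k + 1 := by exact_mod_cast h2'
          omega
        rcases hn_cases with h | h
        · have hθb : θ b = (k : ℝ) * Real.pi := by rw [← hnn, h]
          have hsignP : Real.sign (P.eval b) = (-1 : ℝ) ^ k := by
            rw [hcos b ⟨hab.le, le_rfl⟩, sgn_mul_pos _ (hrpos b ⟨hab.le, le_rfl⟩), hθb,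
              cos_int_mul_pi, sign_neg_one_zpow]
          have hIM1 : IndMinus P Q b = 1/2 := by
            rw [hIM, hsignP, hsigne]
            calc 1/2 * (-1 : ℝ) ^ q * ((-1:ℝ)^k * ((-1:ℝ)^q * (-1:ℝ)^k))
                = 1/2 * ((-1 : ℝ) ^ q * (-1:ℝ)^q) * ((-1:ℝ)^k * (-1:ℝ)^k) := by ring
              _ = 1/2 := by rw [neg_one_pow_mul_self, neg_one_zpow_mul_self]; ring
          rw [hθb, cval_int, hIM1]
          ring
        · have hθb : θ b = ((k : ℝ) + 1) * Real.pi := by rw [← hnn, h]; push_cast; ring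
          have hsignP : Real.sign (P.eval b) = (-1 : ℝ) ^ (k + 1) := by
            rw [hcos b ⟨hab.le, le_rfl⟩, sgn_mul_pos _ (hrpos b ⟨hab.le, le_rfl⟩), hθb,
              show ((k : ℝ) + 1) = ((k + 1 : ℤ) : ℝ) by push_cast; ring,
              cos_int_mul_pi, sign_neg_one_zpow]
          have hIM1 : IndMinus P Q b = -(1/2) := by
            rw [hIM, hsignP, hsigne]
            calc 1/2 * (-1 : ℝ) ^ q * ((-1:ℝ)^(k+1) * ((-1:ℝ)^q * (-1:ℝ)^k))
                = 1/2 * ((-1 : ℝ) ^ q * (-1:ℝ)^q) * ((-1:ℝ)^(k+1) * (-1:ℝ)^k) := by ring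
              _ = -(1/2) := by
                  rw [neg_one_pow_mul_self, neg_one_zpow_succ_mul_self]; ring
          have hcv : cval (θ b) = (k : ℝ) + 1 := by
            rw [hθb, show ((k : ℝ) + 1) = ((k + 1 : ℤ) : ℝ) by push_cast; ring, cval_int]
          rw [hcv, hIM1]
          ring
      · have hIM : IndMinus P Q b = 0 := by
          rw [IndMinus, if_neg]
          rintro ⟨-, -, hlt⟩
          have h0 : Polynomial.rootMultiplicity b Q = 0 :=
            Polynomial.rootMultiplicity_eq_zero hQb
          unfold pval at hlt
          rw [h0] at hlt
          push_cast at hlt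
          omega
        have hsb : Real.sin (θ b) ≠ 0 := by
          intro h
          exact hQb (by rw [hsin b ⟨hab.le, le_rfl⟩, h, mul_zero])
        have hmemb : θ b ∈ Set.Ioo ((k : ℝ) * Real.pi) (((k : ℝ) + 1) * Real.pi) := by
          refine ⟨lt_of_le_of_ne hstripb.1 fun h => hsb ?_,
            lt_of_le_of_ne hstripb.2 fun h => hsb ?_⟩
          · rw [← h]; exact Real.sin_int_mul_pi k
          · rw [h]; exact hsinK1
        rw [cval_of_mem hmemb, hIM]
        ring
    show IndPlus P Q a + (∑ᶠ x ∈ Set.Ioo a b, IndAt P Q x) - IndMinus P Q b = _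
    rw [hfin, hA, hB]
    ring

end CIaux
namespace CIaux

open Real Set Polynomial

lemma theta_int {W Z : ℝ[X]} {θf : ℝ → ℝ} {c : ℝ}
    (hid : Fc W Z c = (‖Fc W Z c‖ : ℂ) * Complex.exp ((θf c : ℂ) * Complex.I))
    (hne : Fc W Z c ≠ 0) (hZ : Z.eval c = 0) : ∃ n : ℤ, θf c = (n : ℝ) * Real.pi := by
  have him : Z.eval c = ‖Fc W Z c‖ * Real.sin (θf c) := by
    conv_lhs => rw [← Fc_im W Z c, hid]
    exact polar_im _ _
  have hs : Real.sin (θf c) = 0 := by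
    rcases mul_eq_zero.1 (him ▸ hZ : ‖Fc W Z c‖ * Real.sin (θf c) = 0) with h | h
    · exact absurd h (norm_pos_iff.mpr hne).ne'
    · exact h
  obtain ⟨n, hn⟩ := Real.sin_eq_zero_iff.1 hs
  exact ⟨n, hn.symm⟩

lemma cval_add_int {x y : ℝ} (hx : ∃ n : ℤ, x = (n : ℝ) * Real.pi)
    (hy : ∃ n : ℤ, y = (n : ℝ) * Real.pi) : cval (x + y) = cval x + cval y := by
  obtain ⟨n, rfl⟩ := hx
  obtain ⟨m, rfl⟩ := hy
  rw [show (n : ℝ) * Real.pi + (m : ℝ) * Real.pi = ((n + m : ℤ) : ℝ) * Real.pi by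
    push_cast; ring, cval_int, cval_int, cval_int]
  push_cast; ring

end CIaux

open CIaux Polynomial in
theorem stmt15 (P Q R S : ℝ[X]) (hPQ : ¬ (P = 0 ∧ Q = 0)) (hRS : ¬ (R = 0 ∧ S = 0))
    (a b : ℝ) (hab : a < b)
    (ha : BadNumber P Q R S a) (hb : BadNumber P Q R S b) :
    Ind (P * R - Q * S) (P * S + Q * R) a b =
      Ind P Q a b + Ind R S a b := by
  obtain ⟨hP, hQ, hR, hS, hV0, hpqrs_a, hpq_a, -⟩ := ha
  obtain ⟨-, -, -, -, -, hpqrs_b, hpq_b, -⟩ := hb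
  have hrs_a : pval R S a < 0 := hpqrs_a ▸ hpq_a
  have hrs_b : pval R S b < 0 := hpqrs_b ▸ hpq_b
  -- reduce (P,Q) by gcd
  set g₁ := GCDMonoid.gcd P Q with hg₁def
  have hg₁ : g₁ ≠ 0 := gcd_ne_zero_of_left hP
  set P' := P / g₁ with hP'def
  set Q' := Q / g₁ with hQ'def
  have hPg : g₁ * P' = P := EuclideanDomain.mul_div_cancel' hg₁ (gcd_dvd_left P Q)
  have hQg : g₁ * Q' = Q := EuclideanDomain.mul_div_cancel' hg₁ (gcd_dvd_right P Q)
  have hP' : P' ≠ 0 := left_div_gcd_ne_zero hP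
  have hQ' : Q' ≠ 0 := right_div_gcd_ne_zero hQ
  have hcop₁ : IsCoprime P' Q' := isCoprime_div_gcd_div_gcd hQ
  -- reduce (R,S) by gcd
  set g₂ := GCDMonoid.gcd R S with hg₂def
  have hg₂ : g₂ ≠ 0 := gcd_ne_zero_of_left hR
  set R' := R / g₂ with hR'def
  set S' := S / g₂ with hS'def
  have hRg : g₂ * R' = R := EuclideanDomain.mul_div_cancel' hg₂ (gcd_dvd_left R S)
  have hSg : g₂ * S' = S := EuclideanDomain.mul_div_cancel' hg₂ (gcd_dvd_right R S)
  have hR' : R' ≠ 0 := left_div_gcd_ne_zero hR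
  have hS' : S' ≠ 0 := right_div_gcd_ne_zero hS
  have hcop₂ : IsCoprime R' S' := isCoprime_div_gcd_div_gcd hS
  -- coprime pairs have no common roots
  have hnc : ∀ (W Z : ℝ[X]), IsCoprime W Z → ∀ t : ℝ, ¬ (W.IsRoot t ∧ Z.IsRoot t) := by
    rintro W Z ⟨u, v, huv⟩ t ⟨h1, h2⟩
    have hev := congrArg (Polynomial.eval t) huv
    rw [Polynomial.eval_add, Polynomial.eval_mul, Polynomial.eval_mul,
      h1, h2, mul_zero, mul_zero, add_zero, Polynomial.eval_one] at hev
    norm_num at hev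
  have hnc₁ := hnc P' Q' hcop₁
  have hnc₂ := hnc R' S' hcop₂
  have hFne₁ : ∀ t : ℝ, Fc P' Q' t ≠ 0 := by
    intro t h0
    refine hnc₁ t ⟨?_, ?_⟩
    · show P'.eval t = 0; rw [← Fc_re P' Q' t, h0, Complex.zero_re]
    · show Q'.eval t = 0; rw [← Fc_im P' Q' t, h0, Complex.zero_im]
  have hFne₂ : ∀ t : ℝ, Fc R' S' t ≠ 0 := by
    intro t h0
    refine hnc₂ t ⟨?_, ?_⟩
    · show R'.eval t = 0; rw [← Fc_re R' S' t, h0, Complex.zero_re]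
    · show S'.eval t = 0; rw [← Fc_im R' S' t, h0, Complex.zero_im]
  -- pval transfer and endpoint roots
  have hpvalPQ : ∀ c : ℝ, pval P Q c = pval P' Q' c := by
    intro c
    have h := pval_mul_left hg₁ hP' hQ' c
    rw [hPg, hQg] at h
    exact h
  have hpvalRS : ∀ c : ℝ, pval R S c = pval R' S' c := by
    intro c
    have h := pval_mul_left hg₂ hR' hS' c
    rw [hRg, hSg] at h
    exact h
  have key : ∀ (W Z : ℝ[X]), W ≠ 0 → Z ≠ 0 → (∀ t : ℝ, ¬ (W.IsRoot t ∧ Z.IsRoot t)) →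
      ∀ c : ℝ, pval W Z c < 0 → Z.eval c = 0 ∧ W.eval c ≠ 0 := by
    intro W Z hW hZ hnc' c hc
    unfold pval at hc
    have hzpos : 0 < Polynomial.rootMultiplicity c Z := by omega
    have hZc : Z.eval c = 0 := (Polynomial.rootMultiplicity_pos hZ).1 hzpos
    exact ⟨hZc, fun hWc => hnc' c ⟨hWc, hZc⟩⟩
  have hkey1a := key P' Q' hP' hQ' hnc₁ a (by rw [← hpvalPQ]; exact hpq_a)
  have hkey1b := key P' Q' hP' hQ' hnc₁ b (by rw [← hpvalPQ]; exact hpq_b)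
  have hkey2a := key R' S' hR' hS' hnc₂ a (by rw [← hpvalRS]; exact hrs_a)
  have hkey2b := key R' S' hR' hS' hnc₂ b (by rw [← hpvalRS]; exact hrs_b)
  -- the product pair
  set U := P' * R' - Q' * S' with hUdef
  set V := P' * S' + Q' * R' with hVdef
  have hFc₃ : ∀ t : ℝ, Fc U V t = Fc P' Q' t * Fc R' S' t := by
    intro t
    unfold Fc
    rw [hUdef, hVdef]
    rw [Polynomial.eval_sub, Polynomial.eval_add, Polynomial.eval_mul, Polynomial.eval_mul,
      Polynomial.eval_mul, Polynomial.eval_mul]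
    have hI : Complex.I ^ 2 = -1 := Complex.I_sq
    push_cast
    linear_combination (-1 : ℂ) * ((Q'.eval t : ℝ) : ℂ) * ((S'.eval t : ℝ) : ℂ) * hI
  have hVg : (g₁ * g₂) * V = P * S + Q * R := by
    rw [hVdef, ← hPg, ← hQg, ← hRg, ← hSg]; ring
  have hUg : (g₁ * g₂) * U = P * R - Q * S := by
    rw [hUdef, ← hPg, ← hQg, ← hRg, ← hSg]; ring
  have hV' : V ≠ 0 := by
    intro h
    rw [h, mul_zero] at hVg
    exact hV0 hVg.symm
  have hU' : U ≠ 0 := by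
    intro h
    have hev := congrArg (Polynomial.eval a) h
    rw [hUdef, Polynomial.eval_zero, Polynomial.eval_sub, Polynomial.eval_mul,
      Polynomial.eval_mul, hkey1a.1, hkey2a.1, mul_zero, sub_zero] at hev
    exact (mul_ne_zero hkey1a.2 hkey2a.2) hev
  have hFne₃ : ∀ t : ℝ, Fc U V t ≠ 0 := by
    intro t h
    rw [hFc₃ t] at h
    rcases mul_eq_zero.1 h with h' | h'
    exacts [hFne₁ t h', hFne₂ t h']
  have hnc₃ : ∀ t : ℝ, ¬ (U.IsRoot t ∧ V.IsRoot t) := by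
    rintro t ⟨h1, h2⟩
    apply hFne₃ t
    unfold Fc
    rw [show U.eval t = 0 from h1, show V.eval t = 0 from h2]
    simp
  -- lifts
  obtain ⟨θ₁, hθ₁c, hθ₁⟩ := exists_argLift P' Q' hab.le (fun t _ => hFne₁ t)
  obtain ⟨θ₂, hθ₂c, hθ₂⟩ := exists_argLift R' S' hab.le (fun t _ => hFne₂ t)
  have hθ₃ : ∀ t ∈ Set.Icc a b, Fc U V t
      = (‖Fc U V t‖ : ℂ) * Complex.exp (((θ₁ t + θ₂ t : ℝ) : ℂ) * Complex.I) := by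
    intro t ht
    calc Fc U V t = Fc P' Q' t * Fc R' S' t := hFc₃ t
      _ = ((‖Fc P' Q' t‖ : ℂ) * Complex.exp ((θ₁ t : ℂ) * Complex.I)) *
          ((‖Fc R' S' t‖ : ℂ) * Complex.exp ((θ₂ t : ℂ) * Complex.I)) := by
          rw [← hθ₁ t ht, ← hθ₂ t ht]
      _ = (‖Fc U V t‖ : ℂ)
          * Complex.exp (((θ₁ t + θ₂ t : ℝ) : ℂ) * Complex.I) := by
          rw [hFc₃ t, norm_mul]
          push_cast
          rw [add_mul, Complex.exp_add]
          ring
  -- lemA applications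
  have hL1 := lemA P' Q' hP' hQ' θ₁ _ a b hab rfl (fun t _ => hnc₁ t) hθ₁c hθ₁
  have hL2 := lemA R' S' hR' hS' θ₂ _ a b hab rfl (fun t _ => hnc₂ t) hθ₂c hθ₂
  have hL3 := lemA U V hU' hV' (fun t => θ₁ t + θ₂ t) _ a b hab rfl (fun t _ => hnc₃ t)
    (hθ₁c.add hθ₂c) hθ₃
  -- IndSeg transfers
  have hT1 : IndSeg P Q a b = IndSeg P' Q' a b := by
    conv_lhs => rw [← hPg, ← hQg]
    exact IndSeg_mul_left hg₁ hP' hQ' a b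
  have hT2 : IndSeg R S a b = IndSeg R' S' a b := by
    conv_lhs => rw [← hRg, ← hSg]
    exact IndSeg_mul_left hg₂ hR' hS' a b
  have hT3 : IndSeg (P * R - Q * S) (P * S + Q * R) a b = IndSeg U V a b := by
    conv_lhs => rw [← hUg, ← hVg]
    exact IndSeg_mul_left (mul_ne_zero hg₁ hg₂) hU' hV' a b
  -- endpoint integrality
  have hi1a := theta_int (hθ₁ a ⟨le_rfl, hab.le⟩) (hFne₁ a) hkey1a.1
  have hi1b := theta_int (hθ₁ b ⟨hab.le, le_rfl⟩) (hFne₁ b) hkey1b.1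
  have hi2a := theta_int (hθ₂ a ⟨le_rfl, hab.le⟩) (hFne₂ a) hkey2a.1
  have hi2b := theta_int (hθ₂ b ⟨hab.le, le_rfl⟩) (hFne₂ b) hkey2b.1
  -- finish
  simp only [Ind, if_pos hab]
  rw [hT3, hT1, hT2, hL3, hL1, hL2]
  rw [cval_add_int hi1b hi2b, cval_add_int hi1a hi2a]
  ring
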